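/- Let m be an odd positive integer, A, B ∈ 𝒯 with B ≠ 0, and d ∈ 𝔽_q. The number of triples (X,Y,Z) ∈ 𝒯³ satisfying X + Y + Z = −A + 2B in R and x³ + y³ + z³ = a³ + b³·d in 𝔽_q equals: 3 if d = 0; 0 if d ∈ M_0 ∪ M_1; and 6 if d ∈ M_3. -/

import Mathlib

open Polynomial

/-- The residue field `𝔽_q = R/2R` of the Galois ring `R = (ℤ/4ℤ)[x]/(f)`. -/
abbrev ResField (f : Polynomial (ZMod 4)) : Type :=
  AdjoinRoot f ⧸ (Ideal.span {2} : Ideal (AdjoinRoot f))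

/-- Reduction modulo 2, `μ : R → R/2R`. -/
noncomputable def muRed (f : Polynomial (ZMod 4)) : AdjoinRoot f →+* ResField f :=
  Ideal.Quotient.mk _

/-- The number of roots of `z³ + z + d` in `𝔽_q`. -/
noncomputable def cubicRoots (f : Polynomial (ZMod 4)) (d : ResField f) : ℕ :=
  Nat.card {z : ResField f // z ^ 3 + z + d = 0}

set_option linter.unusedSectionVars false
set_option maxHeartbeats 2000000

section Aux

/-- `(ℤ/4)/(2) ≃ ℤ/2`. -/
noncomputable def zmod42 : (ZMod 4 ⧸ (Ideal.span {2} : Ideal (ZMod 4))) ≃+* ZMod 2 :=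
  (Ideal.quotEquivOfEq (show Ideal.span {2} = RingHom.ker (ZMod.castHom (by norm_num : (2:ℕ) ∣ 4) (ZMod 2)) by
      ext x
      simp only [Ideal.mem_span_singleton, RingHom.mem_ker]
      constructor
      · rintro ⟨c, rfl⟩; rw [map_mul]; revert c; decide
      · intro hx
        have : x = 0 ∨ x = 2 := by revert hx; revert x; decide
        rcases this with rfl | rfl
        · exact dvd_zero 2
        · exact dvd_refl 2)).trans
    (RingHom.quotientKerEquivOfSurjective
      (fun y => ⟨(y.val : ZMod 4), by revert y; decide⟩))

/-- The residue field of the Galois ring is the field `𝔽₂[X]/(f mod 2)`. -/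
noncomputable def resEquiv (f : Polynomial (ZMod 4)) :
    ResField f ≃+* AdjoinRoot (f.map (ZMod.castHom (by norm_num : (2:ℕ) ∣ 4) (ZMod 2))) :=
  (Ideal.quotEquivOfEq (show (Ideal.span {2} : Ideal (AdjoinRoot f))
        = (Ideal.span {2} : Ideal (ZMod 4)).map (AdjoinRoot.of f) by
      rw [Ideal.map_span, Set.image_singleton, map_ofNat])).trans <|
    (AdjoinRoot.quotAdjoinRootEquivQuotPolynomialQuot (Ideal.span {2}) f).trans <|
    Ideal.quotientEquiv _ _ (Polynomial.mapEquiv zmod42) (by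
      rw [Ideal.map_span, Set.image_singleton]
      have key : (Polynomial.mapEquiv zmod42 : _ →+* _) ((f.map (Ideal.Quotient.mk (Ideal.span {2}))))
          = map (ZMod.castHom (by norm_num : (2:ℕ) ∣ 4) (ZMod 2)) f := by
        show (f.map (Ideal.Quotient.mk _)).map zmod42.toRingHom = _
        rw [Polynomial.map_map]
        congr 1
      rw [key])

section FieldCount
variable {F : Type} [Field F] [Fintype F]

lemma sq_inj (h2 : (2:F) = 0) : ∀ x y : F, x^2 = y^2 → x = y := by
  intro x y h
  have h0 : (x - y)^2 = 0 := by linear_combination h + (y^2 - x*y)*h2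
  have h1 : x - y = 0 := pow_eq_zero_iff (n := 2) (by norm_num) |>.1 h0
  linear_combination h1

lemma count_d0 (h2 : (2:F) = 0) :
    Nat.card {t : F × F × F // t.1 + t.2.1 + t.2.2 = 0 ∧
      t.1*t.2.1 + t.2.1*t.2.2 + t.2.2*t.1 = 1 ∧ t.1*t.2.1*t.2.2 = 0} = 3 := by
  classical
  have hset : {t : F × F × F | t.1 + t.2.1 + t.2.2 = 0 ∧
      t.1*t.2.1 + t.2.1*t.2.2 + t.2.2*t.1 = 1 ∧ t.1*t.2.1*t.2.2 = 0}
      = {((0:F),(1:F),(1:F)), (1,0,1), (1,1,0)} := by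
    ext ⟨u,v,w⟩
    simp only [Set.mem_setOf_eq, Set.mem_insert_iff, Set.mem_singleton_iff, Prod.mk.injEq]
    constructor
    · rintro ⟨ha, hb, hc⟩
      rcases mul_eq_zero.1 hc with hc' | hw
      · rcases mul_eq_zero.1 hc' with hu | hv
        · subst hu
          have hv1 : v = 1 := sq_inj h2 v 1 (by linear_combination v*ha + hb - v*w*h2)
          have hw1 : w = 1 := sq_inj h2 w 1 (by linear_combination w*ha + hb - v*w*h2)
          exact Or.inl ⟨rfl, hv1, hw1⟩
        · subst hv
          have hu1 : u = 1 := sq_inj h2 u 1 (by linear_combination u*ha + hb - u*w*h2)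
          have hw1 : w = 1 := sq_inj h2 w 1 (by linear_combination w*ha + hb - u*w*h2)
          exact Or.inr (Or.inl ⟨hu1, rfl, hw1⟩)
      · subst hw
        have hu1 : u = 1 := sq_inj h2 u 1 (by linear_combination u*ha + hb - u*v*h2)
        have hv1 : v = 1 := sq_inj h2 v 1 (by linear_combination v*ha + hb - u*v*h2)
        exact Or.inr (Or.inr ⟨hu1, hv1, rfl⟩)
    · rintro (⟨rfl,rfl,rfl⟩|⟨rfl,rfl,rfl⟩|⟨rfl,rfl,rfl⟩) <;>
        exact ⟨by linear_combination h2, by ring, by ring⟩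
  have h10 : (1:F) ≠ 0 := one_ne_zero
  calc Nat.card {t : F × F × F // t.1 + t.2.1 + t.2.2 = 0 ∧
      t.1*t.2.1 + t.2.1*t.2.2 + t.2.2*t.1 = 1 ∧ t.1*t.2.1*t.2.2 = 0}
      = ({((0:F),(1:F),(1:F)), (1,0,1), (1,1,0)} : Set (F×F×F)).ncard := by
        rw [← Nat.card_coe_set_eq, ← hset]; rfl
    _ = 3 := by
        rw [Set.ncard_insert_of_notMem (by simp [Prod.ext_iff, h10]) (Set.toFinite _),
          Set.ncard_pair (by simp [Prod.ext_iff, h10])]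

lemma count_d01 (h2 : (2:F) = 0) (d : F) (hd : d ≠ 0)
    (hN : Nat.card {z : F // z^3 + z + d = 0} = 0 ∨ Nat.card {z : F // z^3 + z + d = 0} = 1) :
    Nat.card {t : F × F × F // t.1 + t.2.1 + t.2.2 = 0 ∧
      t.1*t.2.1 + t.2.1*t.2.2 + t.2.2*t.1 = 1 ∧ t.1*t.2.1*t.2.2 = d} = 0 := by
  classical
  rw [Nat.card_eq_zero]
  left
  constructor
  rintro ⟨⟨u,v,w⟩, ha, hb, hc⟩
  dsimp only at ha hb hc
  have hu : u^3 + u + d = 0 := by linear_combination u^2*ha - u*hb + hc + d*h2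
  have hv : v^3 + v + d = 0 := by linear_combination v^2*ha - v*hb + hc + d*h2
  have hw : w^3 + w + d = 0 := by linear_combination w^2*ha - w*hb + hc + d*h2
  rcases hN with hN | hN
  · have : Nat.card {z : F // z^3 + z + d = 0} ≠ 0 :=
      Nat.card_ne_zero.2 ⟨⟨⟨u, hu⟩⟩, inferInstance⟩
    exact this hN
  · have hsub : Subsingleton {z : F // z^3 + z + d = 0} :=
      (Nat.card_eq_one_iff_unique.1 hN).1
    have huv : u = v := congrArg Subtype.val (hsub.elim ⟨u, hu⟩ ⟨v, hv⟩)
    have huw : u = w := congrArg Subtype.val (hsub.elim ⟨u, hu⟩ ⟨w, hw⟩)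
    have hu0 : u = 0 := by linear_combination ha + huv + huw - u*h2
    exact hd (by linear_combination -hc + v*w*hu0)

lemma count_d3 (h2 : (2:F) = 0) (d : F) (hd : d ≠ 0)
    (hN : Nat.card {z : F // z^3 + z + d = 0} = 3) :
    Nat.card {t : F × F × F // t.1 + t.2.1 + t.2.2 = 0 ∧
      t.1*t.2.1 + t.2.1*t.2.2 + t.2.2*t.1 = 1 ∧ t.1*t.2.1*t.2.2 = d} = 6 := by
  classical
  have quad : ∀ u v : F, u^3 + u + d = 0 → v^3 + v + d = 0 → u ≠ v →
      u^2 + u*v + v^2 = 1 := by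
    intro u v hu hv hne
    have h' : (u - v) * (u^2 + u*v + v^2 - 1) = 0 := by
      linear_combination hu - hv + (v - u)*h2
    rcases mul_eq_zero.1 h' with h'' | h''
    · exact absurd (sub_eq_zero.1 h'') hne
    · linear_combination h''
  have fwd : ∀ u v w : F, u + v + w = 0 → u*v + v*w + w*u = 1 → u*v*w = d →
      (u^3 + u + d = 0 ∧ v^3 + v + d = 0 ∧ w^3 + w + d = 0) ∧ u ≠ v ∧ u ≠ w ∧ v ≠ w := by
    intro u v w ha hb hc
    have hu : u^3 + u + d = 0 := by linear_combination u^2*ha - u*hb + hc + d*h2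
    have hv : v^3 + v + d = 0 := by linear_combination v^2*ha - v*hb + hc + d*h2
    have hw : w^3 + w + d = 0 := by linear_combination w^2*ha - w*hb + hc + d*h2
    refine ⟨⟨hu, hv, hw⟩, ?_, ?_, ?_⟩
    · intro huv
      have hw0 : w = 0 := by linear_combination ha + huv - u*h2
      exact hd (by linear_combination -hc + u*v*hw0)
    · intro huw
      have hv0 : v = 0 := by linear_combination ha + huw - u*h2
      exact hd (by linear_combination -hc + u*w*hv0)
    · intro hvw
      have hu0 : u = 0 := by linear_combination ha + hvw - v*h2
      exact hd (by linear_combination -hc + v*w*hu0)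
  have bwd : ∀ u v w : F, u^3 + u + d = 0 → v^3 + v + d = 0 → w^3 + w + d = 0 →
      u ≠ v → u ≠ w → v ≠ w →
      u + v + w = 0 ∧ u*v + v*w + w*u = 1 ∧ u*v*w = d := by
    intro u v w hu hv hw huv huw hvw
    have quv := quad u v hu hv huv
    have quw := quad u w hu hw huw
    have ha : u + v + w = 0 := by
      have h' : (v - w) * (u + v + w) = 0 := by linear_combination quv - quw
      rcases mul_eq_zero.1 h' with h'' | h''
      · exact absurd (sub_eq_zero.1 h'') hvw
      · exact h''
    have hb : u*v + v*w + w*u = 1 := by linear_combination (u+v)*ha - quv - h2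
    have hc : u*v*w = d := by linear_combination u*v*ha - u*quv + hu - (u+d)*h2
    exact ⟨ha, hb, hc⟩
  -- count via distinct triples
  let RS := {z : F // z^3 + z + d = 0}
  let D : Type := {p : RS × RS × RS // p.1 ≠ p.2.1 ∧ p.1 ≠ p.2.2 ∧ p.2.1 ≠ p.2.2}
  let φ : {t : F × F × F // t.1 + t.2.1 + t.2.2 = 0 ∧
      t.1*t.2.1 + t.2.1*t.2.2 + t.2.2*t.1 = 1 ∧ t.1*t.2.1*t.2.2 = d} → D := fun t =>
    ⟨(⟨t.1.1, (fwd t.1.1 t.1.2.1 t.1.2.2 t.2.1 t.2.2.1 t.2.2.2).1.1⟩,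
      ⟨t.1.2.1, (fwd t.1.1 t.1.2.1 t.1.2.2 t.2.1 t.2.2.1 t.2.2.2).1.2.1⟩,
      ⟨t.1.2.2, (fwd t.1.1 t.1.2.1 t.1.2.2 t.2.1 t.2.2.1 t.2.2.2).1.2.2⟩),
      fun h => (fwd t.1.1 t.1.2.1 t.1.2.2 t.2.1 t.2.2.1 t.2.2.2).2.1 (congrArg Subtype.val h),
      fun h => (fwd t.1.1 t.1.2.1 t.1.2.2 t.2.1 t.2.2.1 t.2.2.2).2.2.1 (congrArg Subtype.val h),
      fun h => (fwd t.1.1 t.1.2.1 t.1.2.2 t.2.1 t.2.2.1 t.2.2.2).2.2.2 (congrArg Subtype.val h)⟩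
  have hbij : Function.Bijective φ := by
    constructor
    · rintro ⟨⟨u1,v1,w1⟩, p1⟩ ⟨⟨u2,v2,w2⟩, p2⟩ h
      have e0 : u1 = u2 := congrArg (fun p : D => (p.1.1.1 : F)) h
      have e1 : v1 = v2 := congrArg (fun p : D => (p.1.2.1.1 : F)) h
      have e2 : w1 = w2 := congrArg (fun p : D => (p.1.2.2.1 : F)) h
      subst e0; subst e1; subst e2
      exact Subtype.ext rfl
    · rintro ⟨⟨⟨u,hu⟩,⟨v,hv⟩,⟨w,hw⟩⟩, n12, n13, n23⟩
      obtain ⟨ha, hb, hc⟩ := bwd u v w hu hv hw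
        (fun h => n12 (Subtype.ext h)) (fun h => n13 (Subtype.ext h))
        (fun h => n23 (Subtype.ext h))
      exact ⟨⟨(u, v, w), ha, hb, hc⟩, rfl⟩
  have card3 : Fintype.card RS = 3 := by
    rw [← Nat.card_eq_fintype_card]; exact hN
  let σ : RS ≃ Fin 3 := Fintype.equivFinOfCardEq card3
  let ψ : D ≃ {p : Fin 3 × Fin 3 × Fin 3 // p.1 ≠ p.2.1 ∧ p.1 ≠ p.2.2 ∧ p.2.1 ≠ p.2.2} :=
    Equiv.subtypeEquiv (σ.prodCongr (σ.prodCongr σ)) (by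
      rintro ⟨x, y, z⟩
      simp [Equiv.prodCongr_apply, σ.injective.ne_iff])
  rw [Nat.card_congr ((Equiv.ofBijective φ hbij).trans ψ), Nat.card_eq_fintype_card]
  decide

end FieldCount

end Aux

theorem statement14 (m : ℕ) (hm : Odd m) (hmpos : 0 < m)
    (f : Polynomial (ZMod 4)) (hmonic : f.Monic) (hdeg : f.natDegree = m)
    (hirr : Irreducible (f.map (ZMod.castHom (show (2:ℕ) ∣ 4 by norm_num) (ZMod 2))))
    (A B : AdjoinRoot f) (hA : A ^ 2 ^ m = A) (hB : B ^ 2 ^ m = B) (hB0 : B ≠ 0)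
    (d : ResField f) :
    (d = 0 →
      Nat.card {t : AdjoinRoot f × AdjoinRoot f × AdjoinRoot f //
        (t.1 ^ 2 ^ m = t.1 ∧ t.2.1 ^ 2 ^ m = t.2.1 ∧ t.2.2 ^ 2 ^ m = t.2.2) ∧
        t.1 + t.2.1 + t.2.2 = -A + 2 * B ∧ muRed f t.1 ^ 3 + muRed f t.2.1 ^ 3 + muRed f t.2.2 ^ 3 = muRed f A ^ 3 + muRed f B ^ 3 * d} = 3) ∧
    (d ≠ 0 → (cubicRoots f d = 0 ∨ cubicRoots f d = 1) →
      Nat.card {t : AdjoinRoot f × AdjoinRoot f × AdjoinRoot f //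
        (t.1 ^ 2 ^ m = t.1 ∧ t.2.1 ^ 2 ^ m = t.2.1 ∧ t.2.2 ^ 2 ^ m = t.2.2) ∧
        t.1 + t.2.1 + t.2.2 = -A + 2 * B ∧ muRed f t.1 ^ 3 + muRed f t.2.1 ^ 3 + muRed f t.2.2 ^ 3 = muRed f A ^ 3 + muRed f B ^ 3 * d} = 0) ∧
    (d ≠ 0 → cubicRoots f d = 3 →
      Nat.card {t : AdjoinRoot f × AdjoinRoot f × AdjoinRoot f //
        (t.1 ^ 2 ^ m = t.1 ∧ t.2.1 ^ 2 ^ m = t.2.1 ∧ t.2.2 ^ 2 ^ m = t.2.2) ∧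
        t.1 + t.2.1 + t.2.2 = -A + 2 * B ∧ muRed f t.1 ^ 3 + muRed f t.2.1 ^ 3 + muRed f t.2.2 ^ 3 = muRed f A ^ 3 + muRed f B ^ 3 * d} = 6) := by
  classical
  haveI factirr : Fact (Irreducible (f.map (ZMod.castHom (show (2:ℕ) ∣ 4 by norm_num) (ZMod 2)))) := ⟨hirr⟩
  -- the residue field is a finite field of order `2 ^ m` and characteristic `2`
  have hgm : (f.map (ZMod.castHom (show (2:ℕ) ∣ 4 by norm_num) (ZMod 2))).Monic := hmonic.map _
  have hIsF : IsField (ResField f) :=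
    MulEquiv.isField (Field.toIsField _) (resEquiv f).toMulEquiv
  letI instF : Field (ResField f) := hIsF.toField
  letI : Fintype (AdjoinRoot (f.map (ZMod.castHom (show (2:ℕ) ∣ 4 by norm_num) (ZMod 2)))) :=
    Module.fintypeOfFintype (AdjoinRoot.powerBasis' hgm).basis
  haveI : CharP (AdjoinRoot (f.map (ZMod.castHom (show (2:ℕ) ∣ 4 by norm_num) (ZMod 2)))) 2 := by
    haveI : Fact (Irreducible (f.map (ZMod.castHom (show (2:ℕ) ∣ 4 by norm_num) (ZMod 2)))) := ⟨hirr⟩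
    exact charP_of_injective_ringHom
      (algebraMap (ZMod 2) (AdjoinRoot (f.map (ZMod.castHom (show (2:ℕ) ∣ 4 by norm_num) (ZMod 2))))).injective 2
  letI : Fintype (ResField f) := Fintype.ofEquiv _ (resEquiv f).symm.toEquiv
  have hcardK : Fintype.card (AdjoinRoot (f.map (ZMod.castHom (show (2:ℕ) ∣ 4 by norm_num) (ZMod 2)))) = 2^m := by
    rw [Module.card_fintype (AdjoinRoot.powerBasis' hgm).basis, ZMod.card]
    congr 1
    rw [Fintype.card_fin]
    show (f.map _).natDegree = m
    rw [hmonic.natDegree_map, hdeg]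
  have hcardF : Fintype.card (ResField f) = 2^m := by
    rw [Fintype.card_congr (resEquiv f).toEquiv]; exact hcardK
  haveI : CharP (ResField f) 2 :=
    charP_of_injective_ringHom (f := ((resEquiv f).symm : AdjoinRoot (f.map (ZMod.castHom (show (2:ℕ) ∣ 4 by norm_num) (ZMod 2))) →+* ResField f))
      (fun x y h => (resEquiv f).symm.injective h) 2
  have h2 : (2 : ResField f) = 0 := by
    exact_mod_cast CharP.cast_eq_zero (ResField f) 2
  have powc : ∀ x : ResField f, x^(2^m) = x := by
    intro x; rw [← hcardF]; exact FiniteField.pow_card x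
  -- basic ring facts in the Galois ring
  have h4R : (4 : AdjoinRoot f) = 0 := by
    rw [show (4 : AdjoinRoot f) = algebraMap (ZMod 4) (AdjoinRoot f) 4 from (map_ofNat _ 4).symm,
      show (4 : ZMod 4) = 0 from by decide, map_zero]
  have hker : ∀ r : AdjoinRoot f, muRed f r = 0 ↔ ∃ s, r = 2*s := by
    intro r
    rw [show muRed f r = Ideal.Quotient.mk _ r from rfl, Ideal.Quotient.eq_zero_iff_mem,
      Ideal.mem_span_singleton]
    exact ⟨fun ⟨c,h⟩ => ⟨c,h⟩, fun ⟨c,h⟩ => ⟨c,h⟩⟩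
  have two_eq : ∀ u v : AdjoinRoot f, muRed f u = muRed f v → 2*u = 2*v := by
    intro u v h
    obtain ⟨s, hs⟩ := (hker (u - v)).1 (by rw [map_sub, h, sub_self])
    linear_combination 2*hs + s*h4R
  have ann2 : ∀ r : AdjoinRoot f, 2*r = 0 → muRed f r = 0 := by
    intro r hr
    rw [hker]
    set b := (AdjoinRoot.powerBasis' hmonic).basis with hbdef
    have keyz : ∀ c : ZMod 4, 2*c = 0 → c = 2 * (if c = 0 then 0 else 1) := by decide
    have h2c : ∀ i, (2:ZMod 4) * b.repr r i = 0 := by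
      intro i
      have hsm : (2:ZMod 4) • r = 2*r := by rw [Algebra.smul_def, map_ofNat]
      have : b.repr ((2:ZMod 4) • r) i = 0 := by rw [hsm, hr, map_zero]; rfl
      rw [map_smul] at this
      simpa using this
    refine ⟨∑ i, ((if b.repr r i = 0 then 0 else 1 : ZMod 4)) • b i, ?_⟩
    conv_lhs => rw [← b.sum_repr r]
    rw [Finset.mul_sum]
    apply Finset.sum_congr rfl
    intro i _
    by_cases hc : b.repr r i = 0
    · rw [hc]; simp
    · have hcval : b.repr r i = 2 := by
        rcases (by decide : ∀ c : ZMod 4, 2*c = 0 → c = 0 ∨ c = 2) _ (h2c i) with h0 | hval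
        · exact absurd h0 hc
        · exact hval
      rw [if_neg hc, hcval, one_smul, Algebra.smul_def, map_ofNat]
  have hpow_eq : ∀ u v : AdjoinRoot f, muRed f u = muRed f v → u^(2^m) = v^(2^m) := by
    intro u v h
    obtain ⟨s, hs⟩ := (hker (v - u)).1 (by rw [map_sub, h, sub_self])
    have hv : v = u + 2*s := by linear_combination hs
    obtain ⟨k, hk⟩ : ∃ k, m = k+1 := ⟨m-1, (Nat.succ_pred_eq_of_pos hmpos).symm⟩
    have hsq : (u + 2*s)^2 = u^2 := by linear_combination (u*s + s*s)*h4R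
    rw [hv, show (2:ℕ)^m = 2*2^(m-1) from by
      rw [← pow_succ']
      congr 1
      omega, pow_mul, pow_mul, hsq]
  have Tinj : ∀ X Y : AdjoinRoot f, X^(2^m) = X → Y^(2^m) = Y →
      muRed f X = muRed f Y → X = Y := by
    intro X Y hX hY h
    rw [← hX, ← hY]
    exact hpow_eq X Y h
  have tpow : ∀ u : AdjoinRoot f, (u^(2^m))^(2^m) = u^(2^m) := by
    intro u
    apply hpow_eq
    rw [map_pow]
    exact powc (muRed f u)
  -- the Teichmüller addition formula
  have sq_id : ∀ (X Y : AdjoinRoot f) (k : ℕ),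
      (X+Y)^(2^(k+1)) = X^(2^(k+1)) + Y^(2^(k+1)) + 2*(X*Y)^(2^k) := by
    intro X Y k
    induction k with
    | zero => norm_num; ring
    | succ k ih =>
      have e1 : ∀ Z : AdjoinRoot f, Z^(2^(k+1+1)) = (Z^(2^(k+1)))^2 := by
        intro Z
        rw [show (2:ℕ)^(k+1+1) = 2^(k+1)*2 from by rw [pow_succ], pow_mul]
      rw [e1, e1, e1, ih, mul_pow X Y (2^(k+1))]
      linear_combination ((X*Y)^(2^k)*(X^(2^(k+1)) + Y^(2^(k+1))) + ((X*Y)^(2^k))^2) * h4R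
  have ADD : ∀ X Y : AdjoinRoot f, X^(2^m) = X → Y^(2^m) = Y →
      X + Y = (X+Y)^(2^m) + 2*(X*Y)^(2^(m-1)) := by
    intro X Y hX hY
    obtain ⟨k, hk⟩ : ∃ k, m = k+1 := ⟨m-1, (Nat.succ_pred_eq_of_pos hmpos).symm⟩
    subst hk
    have hs := sq_id X Y k
    simp only [Nat.add_sub_cancel]
    rw [hs, hX, hY]
    linear_combination (-(X*Y)^(2^k))*h4R
  have tripdec : ∀ X Y Z : AdjoinRoot f, X^(2^m) = X → Y^(2^m) = Y → Z^(2^m) = Z →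
      X + Y + Z = (X+Y+Z)^(2^m)
        + 2*(((X+Y)^(2^m)*Z)^(2^(m-1)) + (X*Y)^(2^(m-1))) := by
    intro X Y Z hX hY hZ
    have step1 := ADD X Y hX hY
    have step2 := ADD ((X+Y)^(2^m)) Z (tpow _) hZ
    have step3 : ((X+Y)^(2^m) + Z)^(2^m) = (X+Y+Z)^(2^m) := by
      apply hpow_eq
      rw [map_add, map_add, map_pow, map_add, powc]
    linear_combination step1 + step2 + step3
  have hepow : ∀ c : ResField f, (c^(2^(m-1)))^2 = c := by
    intro c
    rw [← pow_mul, show 2^(m-1)*2 = 2^m from by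
      rw [← pow_succ]
      congr 1
      omega]
    exact powc c
  have hepow' : ∀ c : ResField f, (c^2)^(2^(m-1)) = c := by
    intro c
    rw [← pow_mul, show 2*2^(m-1) = 2^m from by
      rw [← pow_succ']
      congr 1
      omega]
    exact powc c
  -- translation of the Galois-ring constraint to the residue field
  have key : ∀ X Y Z : AdjoinRoot f, X^(2^m) = X → Y^(2^m) = Y → Z^(2^m) = Z →
      (X + Y + Z = -A + 2*B ↔
        (muRed f X + muRed f Y + muRed f Z = muRed f A ∧
         muRed f X * muRed f Y + muRed f Y * muRed f Z + muRed f Z * muRed f X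
           = (muRed f A + muRed f B)^2)) := by
    intro X Y Z hX hY hZ
    have hrhs : -A + 2*B = A + 2*(A+B) := by linear_combination (-A)*h4R
    have htrip := tripdec X Y Z hX hY hZ
    have hmuP : muRed f ((X+Y+Z)^(2^m)) = muRed f X + muRed f Y + muRed f Z := by
      rw [map_pow, map_add, map_add, powc]
    have hmuQ : muRed f (((X+Y)^(2^m)*Z)^(2^(m-1)) + (X*Y)^(2^(m-1)))
        = (muRed f X * muRed f Y + muRed f Y * muRed f Z + muRed f Z * muRed f X)^(2^(m-1)) := by
      rw [map_add, map_pow, map_pow, map_mul, map_pow, map_add, powc, map_mul]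
      rw [← add_pow_char_pow (p := 2)]
      congr 1
      ring
    constructor
    · intro heq
      rw [htrip] at heq
      rw [hrhs] at heq
      have hPA : (X+Y+Z)^(2^m) = A := by
        apply Tinj _ _ (tpow _) hA
        have hμ := congrArg (muRed f) heq
        rw [map_add, map_add, map_mul, map_mul, map_ofNat, h2, zero_mul, zero_mul,
          add_zero, add_zero] at hμ
        exact hμ
      have h2Q : 2*(((X+Y)^(2^m)*Z)^(2^(m-1)) + (X*Y)^(2^(m-1))) = 2*(A+B) := by
        linear_combination heq - hPA
      have hQ2 : muRed f (((X+Y)^(2^m)*Z)^(2^(m-1)) + (X*Y)^(2^(m-1))) = muRed f (A + B) := by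
        have h0 := ann2 ((((X+Y)^(2^m)*Z)^(2^(m-1)) + (X*Y)^(2^(m-1))) - (A+B))
          (by linear_combination h2Q)
        rw [map_sub, sub_eq_zero] at h0
        exact h0
      constructor
      · rw [← hmuP, hPA]
      · have hQv : (muRed f X * muRed f Y + muRed f Y * muRed f Z + muRed f Z * muRed f X)^(2^(m-1))
            = muRed f A + muRed f B := by
          rw [← hmuQ, hQ2, map_add]
        calc muRed f X * muRed f Y + muRed f Y * muRed f Z + muRed f Z * muRed f X
            = ((muRed f X * muRed f Y + muRed f Y * muRed f Z + muRed f Z * muRed f X)^(2^(m-1)))^2 :=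
              (hepow _).symm
          _ = (muRed f A + muRed f B)^2 := by rw [hQv]
    · rintro ⟨hc1, hc2⟩
      rw [htrip, hrhs]
      have hPA : (X+Y+Z)^(2^m) = A := Tinj _ _ (tpow _) hA (by rw [hmuP, hc1])
      have hQAB : 2*(((X+Y)^(2^m)*Z)^(2^(m-1)) + (X*Y)^(2^(m-1))) = 2*(A+B) := by
        apply two_eq
        rw [hmuQ, map_add, hc2, hepow']
      linear_combination hPA + hQAB
  -- B is nonzero in the residue field
  have hbF : muRed f B ≠ 0 := by
    intro h0
    obtain ⟨s, hs⟩ := (hker B).1 h0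
    apply hB0
    rw [← hB, hs, show (2:ℕ)^m = 2*2^(m-1) from by
      rw [← pow_succ']
      congr 1
      omega, pow_mul,
      show (2*s)^2 = 0 from by linear_combination (s*s)*h4R, zero_pow (Nat.two_pow_pos (m-1)).ne']
  -- the Teichmüller section
  have hμsurj : Function.Surjective (muRed f) := Ideal.Quotient.mk_surjective
  have hμτ : ∀ x : ResField f, muRed f ((Function.surjInv hμsurj x)^(2^m)) = x := by
    intro x
    rw [map_pow, Function.surjInv_eq hμsurj, powc]
  -- the first equivalence : Galois-ring triples to residue-field triples
  let E1 : {t : AdjoinRoot f × AdjoinRoot f × AdjoinRoot f //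
        (t.1 ^ 2 ^ m = t.1 ∧ t.2.1 ^ 2 ^ m = t.2.1 ∧ t.2.2 ^ 2 ^ m = t.2.2) ∧
        t.1 + t.2.1 + t.2.2 = -A + 2 * B ∧ muRed f t.1 ^ 3 + muRed f t.2.1 ^ 3 + muRed f t.2.2 ^ 3 = muRed f A ^ 3 + muRed f B ^ 3 * d} ≃
      {s : ResField f × ResField f × ResField f //
        s.1 + s.2.1 + s.2.2 = muRed f A ∧
        s.1*s.2.1 + s.2.1*s.2.2 + s.2.2*s.1 = (muRed f A + muRed f B)^2 ∧
        s.1^3 + s.2.1^3 + s.2.2^3 = muRed f A^3 + muRed f B^3*d} :=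
    { toFun := fun t =>
        ⟨(muRed f t.1.1, muRed f t.1.2.1, muRed f t.1.2.2), by
          obtain ⟨⟨hX, hY, hZ⟩, hsum, hcube⟩ := t.2
          obtain ⟨c1, c2⟩ := (key t.1.1 t.1.2.1 t.1.2.2 hX hY hZ).1 hsum
          exact ⟨c1, c2, hcube⟩⟩
      invFun := fun s =>
        ⟨((Function.surjInv hμsurj s.1.1)^(2^m),
          (Function.surjInv hμsurj s.1.2.1)^(2^m),
          (Function.surjInv hμsurj s.1.2.2)^(2^m)), by
          obtain ⟨c1, c2, c3⟩ := s.2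
          refine ⟨⟨tpow _, tpow _, tpow _⟩, ?_, ?_⟩
          · exact (key _ _ _ (tpow _) (tpow _) (tpow _)).2
              (by rw [hμτ, hμτ, hμτ]; exact ⟨c1, c2⟩)
          · rw [hμτ, hμτ, hμτ]; exact c3⟩
      left_inv := fun t => by
        obtain ⟨⟨X, Y, Z⟩, ⟨hX, hY, hZ⟩, hsum, hcube⟩ := t
        exact Subtype.ext (Prod.ext (Tinj _ _ (tpow _) hX (hμτ _))
          (Prod.ext (Tinj _ _ (tpow _) hY (hμτ _)) (Tinj _ _ (tpow _) hZ (hμτ _))))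
      right_inv := fun s => by
        obtain ⟨⟨x, y, z⟩, hs⟩ := s
        exact Subtype.ext (Prod.ext (hμτ _) (Prod.ext (hμτ _) (hμτ _))) }
  -- the affine change of variables
  let aff : (ResField f × ResField f × ResField f) ≃ (ResField f × ResField f × ResField f) :=
    { toFun := fun u => (muRed f A + muRed f B * u.1, muRed f A + muRed f B * u.2.1,
        muRed f A + muRed f B * u.2.2)
      invFun := fun x => ((x.1 - muRed f A) * (muRed f B)⁻¹, (x.2.1 - muRed f A) * (muRed f B)⁻¹,
        (x.2.2 - muRed f A) * (muRed f B)⁻¹)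
      left_inv := fun u => by
        obtain ⟨u1, u2, u3⟩ := u
        have : ∀ c : ResField f, (muRed f A + muRed f B * c - muRed f A) * (muRed f B)⁻¹ = c := by
          intro c
          field_simp
          ring
        simp only [this]
      right_inv := fun x => by
        obtain ⟨x1, x2, x3⟩ := x
        have : ∀ c : ResField f, muRed f A + muRed f B * ((c - muRed f A) * (muRed f B)⁻¹) = c := by
          intro c
          field_simp
          ring
        simp only [this] }
  have condiff : ∀ u v w : ResField f,
      (u + v + w = 0 ∧ u*v + v*w + w*u = 1 ∧ u*v*w = d) ↔
      ((muRed f A + muRed f B*u) + (muRed f A + muRed f B*v) + (muRed f A + muRed f B*w) = muRed f A ∧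
       (muRed f A + muRed f B*u)*(muRed f A + muRed f B*v)
         + (muRed f A + muRed f B*v)*(muRed f A + muRed f B*w)
         + (muRed f A + muRed f B*w)*(muRed f A + muRed f B*u) = (muRed f A + muRed f B)^2 ∧
       (muRed f A + muRed f B*u)^3 + (muRed f A + muRed f B*v)^3 + (muRed f A + muRed f B*w)^3
         = muRed f A^3 + muRed f B^3*d) := by
    intro u v w
    set a := muRed f A
    set b := muRed f B
    constructor
    · rintro ⟨hs, he, hd3⟩
      refine ⟨by linear_combination b*hs + a*h2,
        by linear_combination b^2*he + 2*a*b*hs + (a^2 - a*b)*h2,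
        by linear_combination (3*a^2*b + 3*a*b^2*(u+v+w) + b^3*(u+v+w)^2
          - 3*b^3*(u*v+v*w+w*u))*hs + (-6*a*b^2)*he + 3*b^3*hd3 + (a^3 - 3*a*b^2 + b^3*d)*h2⟩
    · rintro ⟨H1, H2, H3⟩
      have hs : u + v + w = 0 := by
        have hb1 : b*(u+v+w) = 0 := by linear_combination H1 - a*h2
        exact (mul_eq_zero.1 hb1).resolve_left hbF
      have he : u*v + v*w + w*u = 1 := by
        have hb2 : b^2*((u*v + v*w + w*u) - 1) = 0 := by
          linear_combination H2 - 2*a*b*hs - (a^2 - a*b)*h2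
        have h0 := (mul_eq_zero.1 hb2).resolve_left (pow_ne_zero 2 hbF)
        linear_combination h0
      have hd3 : u*v*w = d := by
        have hb3 : b^3*((u*v*w) - d) = 0 := by
          linear_combination H3 - (3*a^2*b + 3*a*b^2*(u+v+w) + b^3*(u+v+w)^2
            - 3*b^3*(u*v+v*w+w*u))*hs + 6*a*b^2*he
            - (a^3 - 3*a*b^2 + b^3*d + b^3*(u*v*w - d))*h2
        have h0 := (mul_eq_zero.1 hb3).resolve_left (pow_ne_zero 3 hbF)
        linear_combination h0
      exact ⟨hs, he, hd3⟩
  let E2 : {u : ResField f × ResField f × ResField f //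
        u.1 + u.2.1 + u.2.2 = 0 ∧ u.1*u.2.1 + u.2.1*u.2.2 + u.2.2*u.1 = 1 ∧
        u.1*u.2.1*u.2.2 = d} ≃
      {s : ResField f × ResField f × ResField f //
        s.1 + s.2.1 + s.2.2 = muRed f A ∧
        s.1*s.2.1 + s.2.1*s.2.2 + s.2.2*s.1 = (muRed f A + muRed f B)^2 ∧
        s.1^3 + s.2.1^3 + s.2.2^3 = muRed f A^3 + muRed f B^3*d} :=
    Equiv.subtypeEquiv aff (by
      rintro ⟨u, v, w⟩
      exact condiff u v w)
  have main_eq : Nat.card {t : AdjoinRoot f × AdjoinRoot f × AdjoinRoot f //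
        (t.1 ^ 2 ^ m = t.1 ∧ t.2.1 ^ 2 ^ m = t.2.1 ∧ t.2.2 ^ 2 ^ m = t.2.2) ∧
        t.1 + t.2.1 + t.2.2 = -A + 2 * B ∧ muRed f t.1 ^ 3 + muRed f t.2.1 ^ 3 + muRed f t.2.2 ^ 3 = muRed f A ^ 3 + muRed f B ^ 3 * d}
      = Nat.card {u : ResField f × ResField f × ResField f //
        u.1 + u.2.1 + u.2.2 = 0 ∧ u.1*u.2.1 + u.2.1*u.2.2 + u.2.2*u.1 = 1 ∧
        u.1*u.2.1*u.2.2 = d} :=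
    Nat.card_congr (E1.trans E2.symm)
  refine ⟨?_, ?_, ?_⟩
  · intro hd0
    subst hd0
    rw [main_eq]
    exact count_d0 h2
  · intro hd hN
    rw [main_eq]
    exact count_d01 h2 d hd hN
  · intro hd hN
    rw [main_eq]
    exact count_d3 h2 d hd hN
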